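/- (Theorem: unconditional stability of first-order TASE with Runge-Kutta.) Let s ≥ 1 and let a, b : ℕ → ℕ → ℝ be nonnegative Shu-Osher coefficients with Σ_{k=0}^{i-1} a i k = 1 for every 1 ≤ i ≤ s. Let α > 0 be a real number such that b i k ≤ 2 α a i k for all 1 ≤ i ≤ s and k < i (equivalently α ≥ 0.5 · max_{i,k}(b i k / a i k)). Then for every complex λ with Re λ ≤ 0 and every real Δt > 0, setting w = Δtλ/(1 - αΔtλ) (note 1 - αΔtλ ≠ 0 since Re(1 - αΔtλ) ≥ 1), the Runge-Kutta iterates y 0 = y₀, y i = Σ_{k=0}^{i-1} (a i k + b i k * w) * y k satisfy |y s| ≤ |y₀|; i.e., the explicit RK time integration of dy/dt = T¹_λ(α,Δt) λ y is unconditionally stable. -/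

import Mathlib

lemma tase1_key (a b α : ℝ) (ha : 0 ≤ a) (hb : 0 ≤ b) (hba : b ≤ 2 * α * a)
    (z : ℂ) (hz : z.re ≤ 0) (hd : (1 - (α : ℂ) * z) ≠ 0) :
    ‖((a : ℂ) + (b : ℂ) * (z / (1 - (α : ℂ) * z)))‖ ≤ a := by
  have key : ‖((a : ℂ) * (1 - (α : ℂ) * z) + (b : ℂ) * z)‖
      ≤ a * ‖(1 - (α : ℂ) * z)‖ := by
    have hrhs : a * ‖(1 - (α : ℂ) * z)‖
        = Real.sqrt (a ^ 2 * Complex.normSq (1 - (α : ℂ) * z)) := by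
      rw [Real.sqrt_mul (sq_nonneg a), Real.sqrt_sq ha, Complex.norm_def]
    rw [Complex.norm_def, hrhs]
    apply Real.sqrt_le_sqrt
    simp only [Complex.normSq_apply, Complex.add_re, Complex.add_im, Complex.mul_re,
      Complex.mul_im, Complex.sub_re, Complex.sub_im, Complex.one_re, Complex.one_im,
      Complex.ofReal_re, Complex.ofReal_im]
    set x := z.re; set v := z.im
    nlinarith [mul_nonneg hb (mul_nonneg ha (neg_nonneg.mpr hz)),
      mul_nonneg (mul_nonneg hb (sub_nonneg.mpr hba)) (add_nonneg (sq_nonneg x) (sq_nonneg v)),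
      sq_nonneg v, sq_nonneg x]
  have h1 : (a : ℂ) + (b : ℂ) * (z / (1 - (α : ℂ) * z))
      = ((a : ℂ) * (1 - (α : ℂ) * z) + (b : ℂ) * z) / (1 - (α : ℂ) * z) := by
    have hd2 : 1 - z * (α : ℂ) ≠ 0 := by rwa [mul_comm]
    field_simp
  rw [h1, norm_div]
  rw [div_le_iff₀ (norm_pos_iff.mpr hd)]
  exact key

/-- Unconditional stability of first-order TASE with explicit Runge–Kutta methods in
Shu–Osher form: if `α > 0` satisfies `b i k ≤ 2 α (a i k)` (i.e.
`α ≥ 0.5 max (b i k / a i k)`), then for every `Re λ ≤ 0` and `Δt > 0` the RK iterates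
for `dy/dt = T¹_λ(α,Δt) λ y` are contractive. -/
theorem tase1_rk_unconditionally_stable
    (s : ℕ) (hs : 1 ≤ s) (a b : ℕ → ℕ → ℝ)
    (ha : ∀ i k, 0 ≤ a i k) (hb : ∀ i k, 0 ≤ b i k)
    (hsum : ∀ i, 1 ≤ i → i ≤ s → ∑ k ∈ Finset.range i, a i k = 1)
    (α : ℝ) (hα : 0 < α)
    (hαb : ∀ i k, 1 ≤ i → i ≤ s → k < i → b i k ≤ 2 * α * a i k)
    (μ : ℂ) (hμ : μ.re ≤ 0) (Δt : ℝ) (hΔt : 0 < Δt)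
    (w : ℂ) (hw : w = (Δt : ℂ) * μ / (1 - (α : ℂ) * (Δt : ℂ) * μ))
    (y₀ : ℂ) (y : ℕ → ℂ) (hy0 : y 0 = y₀)
    (hy : ∀ i, 1 ≤ i → i ≤ s →
      y i = ∑ k ∈ Finset.range i, (((a i k : ℝ) : ℂ) + ((b i k : ℝ) : ℂ) * w) * y k) :
    (1 - (α : ℂ) * (Δt : ℂ) * μ ≠ 0) ∧ ‖y s‖ ≤ ‖y₀‖ := by
  set z : ℂ := (Δt : ℂ) * μ with hz
  have hzre : z.re ≤ 0 := by
    simp [hz, Complex.mul_re]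
    nlinarith [hΔt.le]
  have hdre : (1 - (α : ℂ) * z).re ≥ 1 := by
    simp [Complex.sub_re, Complex.mul_re]
    nlinarith [hα.le]
  have hd : (1 - (α : ℂ) * z) ≠ 0 := by
    intro h
    rw [h] at hdre
    simp at hdre
    linarith
  have hd' : (1 - (α : ℂ) * (Δt : ℂ) * μ) ≠ 0 := by
    rwa [mul_assoc]
  refine ⟨hd', ?_⟩
  have hw' : w = z / (1 - (α : ℂ) * z) := by rw [hw, hz, mul_assoc]
  have main : ∀ i, i ≤ s → ‖(y i)‖ ≤ ‖y₀‖ := by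
    intro i
    induction i using Nat.strong_induction_on with
    | _ i ih =>
      intro his
      rcases Nat.eq_zero_or_pos i with h0 | h1
      · subst h0; rw [hy0]
      · rw [hy i h1 his]
        calc ‖(∑ k ∈ Finset.range i, (((a i k : ℝ) : ℂ) + ((b i k : ℝ) : ℂ) * w) * y k)‖
            ≤ ∑ k ∈ Finset.range i,
              ‖((((a i k : ℝ) : ℂ) + ((b i k : ℝ) : ℂ) * w) * y k)‖ := by
              exact norm_sum_le _ _
          _ ≤ ∑ k ∈ Finset.range i, a i k * ‖y₀‖ := by
              apply Finset.sum_le_sum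
              intro k hk
              rw [norm_mul]
              have hk' := Finset.mem_range.mp hk
              have h1 : ‖(((a i k : ℝ) : ℂ) + ((b i k : ℝ) : ℂ) * w)‖ ≤ a i k := by
                rw [hw']
                exact tase1_key _ _ α (ha i k) (hb i k) (hαb i k h1 his hk') z hzre hd
              have h2 : ‖(y k)‖ ≤ ‖y₀‖ :=
                ih k hk' (le_trans hk'.le his)
              exact mul_le_mul h1 h2 (norm_nonneg _) (ha i k)
          _ = ‖y₀‖ := by
              rw [← Finset.sum_mul, hsum i h1 his, one_mul]
  exact main s le_rfl
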